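/- Lower bounds for the probability of necessity and sufficiency PNS(k). The probability P(⋂_{j=1}^{k} {Y_j = j}) satisfies all of the following lower bounds: (i) P(⋂_{j=1}^{k} {Y_j = j}) ≥ 0; (ii) P(⋂_{j=1}^{k} {Y_j = j}) ≥ Σ_{j=1}^{k} P(Y_j = j) − k + 1; (iii) for every i ∈ {1,…,k}, P(⋂_{j=1}^{k} {Y_j = j}) ≥ Σ_{1 ≤ j ≤ k, j ≠ i} [ P(Y_j = j) + P(X = j) − P(X = j, Y = j) ] + P(X = i, Y = i) − k + 1. -/

import Mathlib

open MeasureTheory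

lemma bonferroni_aux
    {Ω : Type*} [MeasurableSpace Ω] (P : Measure Ω) [IsProbabilityMeasure P]
    (s : Finset ℕ) (A : ℕ → Set Ω) (hA : ∀ j ∈ s, MeasurableSet (A j)) :
    (∑ j ∈ s, (P (A j)).toReal) - (s.card : ℝ) + 1 ≤ (P (⋂ j ∈ s, A j)).toReal := by
  have hcompl : (⋂ j ∈ s, A j)ᶜ = ⋃ j ∈ s, (A j)ᶜ := by
    simp [Set.compl_iInter]
  have hle : P ((⋂ j ∈ s, A j)ᶜ) ≤ ∑ j ∈ s, P ((A j)ᶜ) := by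
    rw [hcompl]; exact measure_biUnion_finset_le s _
  have hmeas : MeasurableSet (⋂ j ∈ s, A j) := by
    exact MeasurableSet.biInter s.countable_toSet hA
  have h1 : (P ((⋂ j ∈ s, A j)ᶜ)).toReal = 1 - (P (⋂ j ∈ s, A j)).toReal := by
    rw [prob_compl_eq_one_sub hmeas, ENNReal.toReal_sub_of_le (prob_le_one) (by simp)]
    simp
  have h2 : (P ((⋂ j ∈ s, A j)ᶜ)).toReal ≤ ∑ j ∈ s, (P ((A j)ᶜ)).toReal := by
    rw [← ENNReal.toReal_sum (fun j _ => measure_ne_top P _)]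
    exact ENNReal.toReal_mono (by simp [ENNReal.sum_ne_top, measure_ne_top]) hle
  have h3 : ∀ j ∈ s, (P ((A j)ᶜ)).toReal = 1 - (P (A j)).toReal := by
    intro j hj
    rw [prob_compl_eq_one_sub (hA j hj), ENNReal.toReal_sub_of_le (prob_le_one) (by simp)]
    simp
  rw [Finset.sum_congr rfl h3, Finset.sum_sub_distrib, Finset.sum_const, nsmul_eq_mul,
    mul_one] at h2
  rw [h1] at h2
  linarith

theorem pns_k_lower_bounds
    {Ω : Type*} [MeasurableSpace Ω] (P : Measure Ω) [IsProbabilityMeasure P]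
    (n k : ℕ) (hk1 : 1 ≤ k) (hkn : k ≤ n)
    (X : Ω → ℕ) (Y : ℕ → Ω → ℕ) (Yobs : Ω → ℕ)
    (hX : Measurable X) (hY : ∀ j, Measurable (Y j))
    (hXr : ∀ ω, X ω ∈ Finset.Icc 1 n)
    (hYr : ∀ j ω, Y j ω ∈ Finset.Icc 1 n)
    (hcons : ∀ ω, Yobs ω = Y (X ω) ω) :
    0 ≤ (P (⋂ j ∈ Finset.Icc 1 k, {ω | Y j ω = j})).toReal ∧
    (∑ j ∈ Finset.Icc 1 k, (P {ω | Y j ω = j}).toReal) - (k : ℝ) + 1 ≤ (P (⋂ j ∈ Finset.Icc 1 k, {ω | Y j ω = j})).toReal ∧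
    ∀ i ∈ Finset.Icc 1 k,
      (∑ j ∈ (Finset.Icc 1 k).erase i,
          ((P {ω | Y j ω = j}).toReal + (P {ω | X ω = j}).toReal - (P {ω | X ω = j ∧ Yobs ω = j}).toReal))
        + (P {ω | X ω = i ∧ Yobs ω = i}).toReal - (k : ℝ) + 1 ≤ (P (⋂ j ∈ Finset.Icc 1 k, {ω | Y j ω = j})).toReal := by
  have hcard : ((Finset.Icc 1 k).card : ℝ) = (k : ℝ) := by
    simp [Nat.card_Icc]
  have hYm : ∀ j : ℕ, MeasurableSet {ω | Y j ω = j} := fun j =>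
    (hY j) (measurableSet_singleton j)
  have hXm : ∀ j : ℕ, MeasurableSet {ω | X ω = j} := fun j =>
    hX (measurableSet_singleton j)
  -- consistency set rewriting
  have hconsSet : ∀ j : ℕ, {ω | X ω = j ∧ Yobs ω = j} = {ω | X ω = j} ∩ {ω | Y j ω = j} := by
    intro j
    ext ω
    simp only [Set.mem_setOf_eq, Set.mem_inter_iff]
    constructor
    · rintro ⟨h1, h2⟩; exact ⟨h1, by rw [hcons ω, h1] at h2; exact h2⟩
    · rintro ⟨h1, h2⟩; exact ⟨h1, by rw [hcons ω, h1]; exact h2⟩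
  refine ⟨ENNReal.toReal_nonneg, ?_, ?_⟩
  · have := bonferroni_aux P (Finset.Icc 1 k) (fun j => {ω | Y j ω = j}) (fun j _ => hYm j)
    rw [hcard] at this
    exact this
  · intro i hi
    set B : ℕ → Set Ω := fun j =>
      if j = i then {ω | X ω = i} ∩ {ω | Y i ω = i} else {ω | Y j ω = j} ∪ {ω | X ω = j} with hB
    have hBm : ∀ j ∈ Finset.Icc 1 k, MeasurableSet (B j) := by
      intro j _
      by_cases h : j = i <;> simp [hB, h, (hXm _).inter (hYm _), (hYm _).union (hXm _)]
    have hsub : (⋂ j ∈ Finset.Icc 1 k, B j) ⊆ ⋂ j ∈ Finset.Icc 1 k, {ω | Y j ω = j} := by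
      intro ω hω
      simp only [Set.mem_iInter] at hω ⊢
      intro j hj
      have hωi := hω i hi
      simp only [hB, if_pos rfl, Set.mem_inter_iff, Set.mem_setOf_eq] at hωi
      by_cases h : j = i
      · subst h; exact hωi.2
      · have := hω j hj
        simp only [hB, if_neg h, Set.mem_union, Set.mem_setOf_eq] at this
        rcases this with h1 | h1
        · exact h1
        · exact absurd (h1.symm.trans hωi.1) h
    have hmono : (P (⋂ j ∈ Finset.Icc 1 k, B j)).toReal ≤
        (P (⋂ j ∈ Finset.Icc 1 k, {ω | Y j ω = j})).toReal :=
      ENNReal.toReal_mono (measure_ne_top P _) (measure_mono hsub)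
    have hbon := bonferroni_aux P (Finset.Icc 1 k) B hBm
    rw [hcard] at hbon
    -- rewrite the sum
    have hsum : (∑ j ∈ Finset.Icc 1 k, (P (B j)).toReal) =
        (P (B i)).toReal + ∑ j ∈ (Finset.Icc 1 k).erase i, (P (B j)).toReal :=
      (Finset.add_sum_erase _ _ hi).symm
    have hBi : (P (B i)).toReal = (P {ω | X ω = i ∧ Yobs ω = i}).toReal := by
      rw [hconsSet i]; simp [hB]
    have hBj : ∀ j ∈ (Finset.Icc 1 k).erase i, (P (B j)).toReal =
        (P {ω | Y j ω = j}).toReal + (P {ω | X ω = j}).toReal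
          - (P {ω | X ω = j ∧ Yobs ω = j}).toReal := by
      intro j hj
      have hne : j ≠ i := Finset.ne_of_mem_erase hj
      have hunion := measure_union_add_inter (μ := P) {ω | Y j ω = j} (hXm j)
      have hfin : ∀ S : Set Ω, P S ≠ ⊤ := fun S => measure_ne_top P S
      have := congrArg ENNReal.toReal hunion
      rw [ENNReal.toReal_add (hfin _) (hfin _), ENNReal.toReal_add (hfin _) (hfin _)] at this
      have hint : {ω | Y j ω = j} ∩ {ω | X ω = j} = {ω | X ω = j ∧ Yobs ω = j} := by
        rw [hconsSet j, Set.inter_comm]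
      rw [hB]; simp only [if_neg hne]
      rw [hint] at this
      linarith
    rw [hsum, hBi, Finset.sum_congr rfl hBj] at hbon
    linarith
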